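/- In the Lie algebra 𝔤 of Example 4.2 (brackets [W,X]=-X, [W,Y]=Y, [X,Y]=Z, others zero), the distribution element X alone fails the generation condition: span{W, X, ⁅W, X⁆} = span{W, X} ≠ span{W, X, Y}, since ⁅W,X⁆ = -X. Meanwhile for every s ≠ 0, span{W, X + sY, ⁅W, X + sY⁆} = span{W, X, Y}. -/

import Mathlib

/-- The bracket of the Lie algebra of `Sol⁴₁` in the basis `W = e₀`, `X = e₁`,
`Y = e₂`, `Z = e₃`, determined by `[W,X] = -X`, `[W,Y] = Y`, `[X,Y] = Z` and all
other basis brackets zero. -/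
def solBracket (u v : Fin 4 → ℝ) : Fin 4 → ℝ :=
  ![0, -(u 0 * v 1 - u 1 * v 0), u 0 * v 2 - u 2 * v 0, u 1 * v 2 - u 2 * v 1]

theorem sol_rotation_number_not_homotopy_invariant :
    let W : Fin 4 → ℝ := ![1, 0, 0, 0]
    let X : Fin 4 → ℝ := ![0, 1, 0, 0]
    let Y : Fin 4 → ℝ := ![0, 0, 1, 0]
    solBracket W X = -X ∧
    Submodule.span ℝ {W, X, solBracket W X} = Submodule.span ℝ {W, X} ∧
    Submodule.span ℝ {W, X} ≠ Submodule.span ℝ {W, X, Y} ∧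
    ∀ s : ℝ, s ≠ 0 →
      solBracket W (X + s • Y) = -X + s • Y ∧
      Submodule.span ℝ {W, X + s • Y, solBracket W (X + s • Y)} =
        Submodule.span ℝ {W, X, Y} := by
  intro W X Y
  have hWX : solBracket W X = -X := by
    funext i; fin_cases i <;> simp [solBracket, W, X]
  have hneg : -X ∈ Submodule.span ℝ ({W, X} : Set (Fin 4 → ℝ)) :=
    Submodule.neg_mem _ (Submodule.subset_span (by simp))
  refine ⟨hWX, ?_, ?_, ?_⟩
  · rw [hWX]
    apply le_antisymm
    · rw [Submodule.span_le]
      rintro v (rfl | rfl | rfl)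
      · exact Submodule.subset_span (by simp)
      · exact Submodule.subset_span (by simp)
      · exact hneg
    · exact Submodule.span_mono (by intro v hv; simp at hv; rcases hv with rfl | rfl <;> simp)
  · intro h
    have hY : Y ∈ Submodule.span ℝ ({W, X} : Set (Fin 4 → ℝ)) := by
      rw [h]; exact Submodule.subset_span (by simp)
    rw [Submodule.mem_span_pair] at hY
    obtain ⟨a, b, hab⟩ := hY
    have := congrFun hab 2
    simp [W, X, Y] at this
  · intro s hs
    have hb : solBracket W (X + s • Y) = -X + s • Y := by
      funext i; fin_cases i <;> simp [solBracket, W, X, Y]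
    refine ⟨hb, ?_⟩
    rw [hb]
    apply le_antisymm
    · rw [Submodule.span_le]
      rintro v (rfl | rfl | rfl)
      · exact Submodule.subset_span (by simp)
      · exact Submodule.add_mem _ (Submodule.subset_span (by simp))
          (Submodule.smul_mem _ s (Submodule.subset_span (by simp)))
      · exact Submodule.add_mem _ (Submodule.neg_mem _ (Submodule.subset_span (by simp)))
          (Submodule.smul_mem _ s (Submodule.subset_span (by simp)))
    · rw [Submodule.span_le]
      have h1 : X + s • Y ∈ Submodule.span ℝ ({W, X + s • Y, -X + s • Y} : Set (Fin 4 → ℝ)) :=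
        Submodule.subset_span (by simp)
      have h2 : -X + s • Y ∈ Submodule.span ℝ ({W, X + s • Y, -X + s • Y} : Set (Fin 4 → ℝ)) :=
        Submodule.subset_span (by simp)
      rintro v (rfl | rfl | rfl)
      · exact Submodule.subset_span (by simp)
      · have hm := Submodule.smul_mem _ (1/2 : ℝ) (Submodule.sub_mem _ h1 h2)
        rw [SetLike.mem_coe]
        convert hm using 1
        funext i; fin_cases i <;> simp [W, X, Y] <;> ring
      · have hm := Submodule.smul_mem _ (1/(2*s) : ℝ) (Submodule.add_mem _ h1 h2)
        rw [SetLike.mem_coe]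
        convert hm using 1
        funext i; fin_cases i <;> simp [W, X, Y] <;> field_simp <;> ring
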